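/- arXiv:1501.02695 — 2 statements merged into one kernel-verified Lean document; each statement's English description precedes it below -/
import Mathlib

section
/- Fix an integer k ≥ 2 and define g_k(λ) = λ·f_{k−1}(λ)/f_k(λ) and ψ-values via h̃(λ) = e^{−λ} λ^{k−1} / (f_{k−1}(λ)·(k−1)!). Then the function ψ(x) = h̃(λ(x)), where λ(x) > 0 is a root of g_k(λ) = x, is strictly decreasing on (k, ∞): for all reals x₁, x₂ with k < x₁ < x₂ and all λ₁, λ₂ > 0 satisfying g_k(λ₁) = x₁ and g_k(λ₂) = x₂, one has h̃(λ₂) < h̃(λ₁). -/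
/-- `fPo k μ = e^{-μ} ∑_{i ≥ k} μ^i / i!`, the probability that a Poisson random
variable with mean `μ` is at least `k`. -/
noncomputable def fPo (k : ℕ) (μ : ℝ) : ℝ :=
  Real.exp (-μ) * ∑' i : ℕ, μ ^ (k + i) / (Nat.factorial (k + i) : ℝ)

/-- `gPo k x = x * f_{k-1}(x) / f_k(x)`. -/
noncomputable def gPo (k : ℕ) (x : ℝ) : ℝ := x * fPo (k - 1) x / fPo k x

/-- `htil k λ = e^{-λ} λ^{k-1} / (f_{k-1}(λ) (k-1)!)`. -/
noncomputable def htil (k : ℕ) (l : ℝ) : ℝ :=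
  Real.exp (-l) * l ^ (k - 1) / (fPo (k - 1) l * (Nat.factorial (k - 1) : ℝ))

noncomputable def Eser (k : ℕ) (l : ℝ) : ℝ := ∑' j : ℕ, l ^ j / (Nat.factorial (k + j) : ℝ)

lemma summable_Eser (k : ℕ) {l : ℝ} (hl : 0 ≤ l) :
    Summable (fun j : ℕ => l ^ j / (Nat.factorial (k + j) : ℝ)) := by
  refine Summable.of_nonneg_of_le (fun j => by positivity) (fun j => ?_)
    (Real.summable_pow_div_factorial l)
  gcongr
  all_goals first
    | positivity
    | omega

lemma Eser_pos (k : ℕ) {l : ℝ} (hl : 0 < l) : 0 < Eser k l :=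
  Summable.tsum_pos (summable_Eser k hl.le) (fun j => by positivity) 0 (by positivity)

lemma Eser_lt (k : ℕ) {a b : ℝ} (ha : 0 < a) (hab : a < b) : Eser k a < Eser k b := by
  refine Summable.tsum_lt_tsum_of_nonneg (i := 1) (fun j => by positivity) (fun j => ?_) ?_
    (summable_Eser k (ha.trans hab).le)
  · gcongr
  · have h1 : a ^ 1 < b ^ 1 := by simpa using hab
    gcongr

lemma Eser_tsum_shift (k : ℕ) (l : ℝ) :
    ∑' i : ℕ, l ^ (k + i) / (Nat.factorial (k + i) : ℝ) = l ^ k * Eser k l := by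
  rw [Eser, ← tsum_mul_left]
  exact tsum_congr fun i => by rw [pow_add]; ring

lemma Eser_succ (k : ℕ) {l : ℝ} (hl : 0 ≤ l) :
    Eser k l = 1 / (Nat.factorial k : ℝ) + l * Eser (k + 1) l := by
  rw [Eser, Summable.tsum_eq_zero_add (summable_Eser k hl)]
  have h2 : ∑' j : ℕ, l ^ (j + 1) / (Nat.factorial (k + (j + 1)) : ℝ)
      = l * Eser (k + 1) l := by
    rw [Eser, ← tsum_mul_left]
    refine tsum_congr fun j => ?_
    rw [show k + (j + 1) = k + 1 + j by ring, pow_succ']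
    ring
  rw [h2]
  norm_num

lemma fPo_eq (k : ℕ) (l : ℝ) : fPo k l = Real.exp (-l) * (l ^ k * Eser k l) := by
  rw [fPo, Eser_tsum_shift]
section Stage2
open Finset

noncomputable def Dser (k : ℕ) (l : ℝ) : ℝ :=
  ∑' n : ℕ, ((n : ℝ) + 1) * l ^ n / (Nat.factorial (k + 1 + n) : ℝ)

lemma summable_Dser (k : ℕ) {l : ℝ} (hl : 0 ≤ l) :
    Summable (fun n : ℕ => ((n : ℝ) + 1) * l ^ n / (Nat.factorial (k + 1 + n) : ℝ)) := by
  refine Summable.of_nonneg_of_le (fun n => by positivity) (fun n => ?_)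
    (Real.summable_pow_div_factorial l)
  rw [div_le_div_iff₀ (by positivity) (by positivity)]
  have h0 : Nat.factorial (n + 1) ≤ Nat.factorial (k + 1 + n) := Nat.factorial_le (by omega)
  have h1 : ((n : ℝ) + 1) * (Nat.factorial n : ℝ) ≤ (Nat.factorial (k + 1 + n) : ℝ) := by
    rw [Nat.factorial_succ] at h0
    exact_mod_cast h0
  calc ((n : ℝ) + 1) * l ^ n * (Nat.factorial n : ℝ)
      = l ^ n * (((n : ℝ) + 1) * (Nat.factorial n : ℝ)) := by ring
    _ ≤ l ^ n * (Nat.factorial (k + 1 + n) : ℝ) := by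
        refine mul_le_mul_of_nonneg_left ?_ (by positivity)
        exact_mod_cast h1
    _ = l ^ n * (Nat.factorial (k + 1 + n) : ℝ) := rfl

lemma Dser_eq (k : ℕ) {l : ℝ} (hl : 0 ≤ l) :
    Dser k l = Eser k l - (k : ℝ) * Eser (k + 1) l := by
  rw [Eser, Eser, ← tsum_mul_left,
    ← Summable.tsum_sub (summable_Eser k hl) ((summable_Eser (k + 1) hl).mul_left _), Dser]
  refine tsum_congr fun n => ?_
  have hfac : (Nat.factorial (k + 1 + n) : ℝ) = ((k : ℝ) + n + 1) * (Nat.factorial (k + n) : ℝ) := by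
    rw [show k + 1 + n = (k + n) + 1 by ring, Nat.factorial_succ]
    push_cast; ring
  have h0 : (Nat.factorial (k + n) : ℝ) ≠ 0 := by positivity
  have h2 : (Nat.factorial (k + 1 + n) : ℝ) ≠ 0 := by positivity
  field_simp
  rw [hfac]
  ring

lemma fact_ineq (m a b : ℕ) :
    Nat.factorial (m + 1 + a) * Nat.factorial (m + 1 + b)
      ≤ Nat.factorial m * Nat.factorial (m + a + b + 2) := by
  have h1 := Nat.choose_mul_factorial_mul_factorial (show a + 1 ≤ m + 1 + a by omega)
  have h2 := Nat.choose_mul_factorial_mul_factorial (show a + 1 ≤ m + a + b + 2 by omega)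
  have h3 : (m + 1 + a).choose (a + 1) ≤ (m + a + b + 2).choose (a + 1) :=
    Nat.choose_le_choose _ (by omega)
  have e1 : m + 1 + a - (a + 1) = m := by omega
  have e2 : m + a + b + 2 - (a + 1) = m + b + 1 := by omega
  rw [e1] at h1
  rw [e2] at h2
  calc Nat.factorial (m + 1 + a) * Nat.factorial (m + 1 + b)
      = (m + 1 + a).choose (a + 1) * Nat.factorial (a + 1) * Nat.factorial m
          * Nat.factorial (m + 1 + b) := by rw [h1]
    _ ≤ (m + a + b + 2).choose (a + 1) * Nat.factorial (a + 1) * Nat.factorial m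
          * Nat.factorial (m + 1 + b) := by
        exact Nat.mul_le_mul_right _ (Nat.mul_le_mul_right _ (Nat.mul_le_mul_right _ h3))
    _ = Nat.factorial m * ((m + a + b + 2).choose (a + 1) * Nat.factorial (a + 1)
          * Nat.factorial (m + b + 1)) := by
        rw [show m + 1 + b = m + b + 1 by ring]; ring
    _ = Nat.factorial m * Nat.factorial (m + a + b + 2) := by rw [h2]

set_option maxHeartbeats 1000000 in
lemma core_ineq (m : ℕ) {l : ℝ} (hl : 0 < l) :
    Dser (m + 1) l < (Nat.factorial m : ℝ) * (Eser (m + 1) l) ^ 2 := by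
  set k := m + 1 with hk
  have hnorm : Summable (fun j : ℕ => ‖l ^ j / (Nat.factorial (k + j) : ℝ)‖) := by
    refine (summable_Eser k hl.le).congr fun j => ?_
    rw [Real.norm_eq_abs, abs_of_nonneg (by positivity)]
  have hA := summable_sum_mul_antidiagonal_of_summable_norm'
    (f := fun j : ℕ => l ^ j / (Nat.factorial (k + j) : ℝ))
    (g := fun j : ℕ => l ^ j / (Nat.factorial (k + j) : ℝ))
    hnorm (summable_Eser k hl.le) hnorm (summable_Eser k hl.le)
  have hEE : (Eser k l) ^ 2 = ∑' n : ℕ, ∑ p ∈ antidiagonal n,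
      (l ^ p.1 / (Nat.factorial (k + p.1) : ℝ)) * (l ^ p.2 / (Nat.factorial (k + p.2) : ℝ)) := by
    rw [sq, Eser]
    exact tsum_mul_tsum_eq_tsum_sum_antidiagonal_of_summable_norm hnorm hnorm
  rw [hEE, ← tsum_mul_left, Dser]
  refine Summable.tsum_lt_tsum_of_nonneg (i := 0) (fun n => by positivity) (fun n => ?_) ?_
    (hA.mul_left _)
  · -- termwise inequality
    have hcard : ((antidiagonal n).card : ℝ) = (n : ℝ) + 1 := by
      rw [Nat.card_antidiagonal]; push_cast; ring
    have hbound : ∀ p ∈ antidiagonal n,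
        l ^ n / (Nat.factorial (k + 1 + n) : ℝ) ≤
          (Nat.factorial m : ℝ) *
            ((l ^ p.1 / (Nat.factorial (k + p.1) : ℝ)) * (l ^ p.2 / (Nat.factorial (k + p.2) : ℝ))) := by
      intro p hp
      have hpn : p.1 + p.2 = n := by
        simpa using (Finset.HasAntidiagonal.mem_antidiagonal.mp hp)
      have hfl : (Nat.factorial (k + p.1) : ℝ) * (Nat.factorial (k + p.2) : ℝ)
          ≤ (Nat.factorial m : ℝ) * (Nat.factorial (k + 1 + n) : ℝ) := by
        have h5 := fact_ineq m p.1 p.2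
        have heq : m + p.1 + p.2 + 2 = k + 1 + n := by omega
        rw [heq] at h5
        exact_mod_cast h5
      have hln : l ^ p.1 * l ^ p.2 = l ^ n := by rw [← pow_add, hpn]
      rw [div_mul_div_comm, hln, mul_div_assoc', div_le_div_iff₀ (by positivity) (by positivity)]
      calc l ^ n * ((Nat.factorial (k + p.1) : ℝ) * (Nat.factorial (k + p.2) : ℝ))
          ≤ l ^ n * ((Nat.factorial m : ℝ) * (Nat.factorial (k + 1 + n) : ℝ)) :=
            mul_le_mul_of_nonneg_left hfl (by positivity)
        _ = (Nat.factorial m : ℝ) * l ^ n * (Nat.factorial (k + 1 + n) : ℝ) := by ring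
    calc ((n : ℝ) + 1) * l ^ n / (Nat.factorial (k + 1 + n) : ℝ)
        = ((antidiagonal n).card : ℝ) * (l ^ n / (Nat.factorial (k + 1 + n) : ℝ)) := by
          rw [hcard]; ring
      _ ≤ ∑ p ∈ antidiagonal n, (Nat.factorial m : ℝ) *
            ((l ^ p.1 / (Nat.factorial (k + p.1) : ℝ)) * (l ^ p.2 / (Nat.factorial (k + p.2) : ℝ))) := by
          simpa [nsmul_eq_mul] using Finset.card_nsmul_le_sum (antidiagonal n) _ _ hbound
      _ = (Nat.factorial m : ℝ) * ∑ p ∈ antidiagonal n,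
            ((l ^ p.1 / (Nat.factorial (k + p.1) : ℝ)) * (l ^ p.2 / (Nat.factorial (k + p.2) : ℝ))) := by
          rw [Finset.mul_sum]
  · -- strictness at n = 0
    rw [Finset.Nat.antidiagonal_zero]
    simp only [Finset.sum_singleton]
    have hkk : (Nat.factorial (k + 1) : ℝ) = ((k : ℝ) + 1) * (Nat.factorial k : ℝ) := by
      exact_mod_cast congrArg (Nat.cast (R := ℝ)) (Nat.factorial_succ k)
    have hmk : (Nat.factorial k : ℝ) = ((m : ℝ) + 1) * (Nat.factorial m : ℝ) := by
      rw [hk]; exact_mod_cast congrArg (Nat.cast (R := ℝ)) (Nat.factorial_succ m)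
    have hm0 : (0:ℝ) < (Nat.factorial m : ℝ) := by positivity
    have hk0 : (0:ℝ) < (Nat.factorial k : ℝ) := by positivity
    rw [show k + 1 + 0 = k + 1 by ring]
    simp only [pow_zero, Nat.cast_zero, add_zero, Nat.add_zero, zero_add, one_mul]
    rw [hkk]
    rw [div_lt_iff₀ (by positivity)]
    have h6 : (Nat.factorial m : ℝ) * (1 / (Nat.factorial (k + 0) : ℝ) * (1 / (Nat.factorial (k + 0) : ℝ)))
        = (Nat.factorial m : ℝ) / ((Nat.factorial k : ℝ) * (Nat.factorial k : ℝ)) := by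
      rw [show k + 0 = k from rfl]; ring
    rw [h6, div_mul_eq_mul_div, lt_div_iff₀ (by positivity), hmk]
    have hkc : (k : ℝ) = (m : ℝ) + 1 := by rw [hk]; push_cast; ring
    rw [hkc]
    nlinarith [hm0, sq_nonneg ((m:ℝ))]

end Stage2
section Stage3
open Finset

noncomputable def Pser (k : ℕ) (x : ℝ) : ℝ := ∑ j ∈ Finset.range k, x ^ j / (Nat.factorial j : ℝ)

noncomputable def Gfun (m : ℕ) (x : ℝ) : ℝ :=
  x + x ^ (m + 1) / ((Nat.factorial m : ℝ) * (Real.exp x - Pser (m + 1) x))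

lemma exp_eq_tsum_real (x : ℝ) : Real.exp x = ∑' n : ℕ, x ^ n / (Nat.factorial n : ℝ) := by
  rw [Real.exp_eq_exp_ℝ, NormedSpace.exp_eq_tsum_div]

lemma exp_sub_Pser (k : ℕ) (x : ℝ) : Real.exp x - Pser k x = x ^ k * Eser k x := by
  have hs : Summable (fun n : ℕ => x ^ n / (Nat.factorial n : ℝ)) :=
    Real.summable_pow_div_factorial x
  rw [exp_eq_tsum_real, ← Summable.sum_add_tsum_nat_add k hs, Pser]
  have h2 : ∑' i : ℕ, x ^ (i + k) / (Nat.factorial (i + k) : ℝ) = x ^ k * Eser k x := by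
    rw [← Eser_tsum_shift k x]
    exact tsum_congr fun i => by rw [add_comm i k]
  rw [h2]
  ring

lemma Q_pos (m : ℕ) {x : ℝ} (hx : 0 < x) : 0 < Real.exp x - Pser (m + 1) x := by
  rw [exp_sub_Pser]
  have := Eser_pos (m + 1) hx
  positivity

lemma hasDerivAt_Pser (m : ℕ) (x : ℝ) :
    HasDerivAt (fun y => Pser (m + 1) y) (Pser m x) x := by
  have h : ∀ j ∈ Finset.range (m + 1), HasDerivAt
      (fun y : ℝ => y ^ j / (Nat.factorial j : ℝ))
      ((j : ℝ) * x ^ (j - 1) / (Nat.factorial j : ℝ)) x :=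
    fun j _ => (hasDerivAt_pow j x).div_const _
  have H : HasDerivAt (fun y => ∑ i ∈ Finset.range (m + 1), y ^ i / (Nat.factorial i : ℝ)) (∑ i ∈ Finset.range (m + 1), (i : ℝ) * x ^ (i - 1) / (Nat.factorial i : ℝ)) x := HasDerivAt.fun_sum h
  convert H using 1
  · rfl
  rw [Pser, Finset.sum_range_succ']
  simp only [Nat.cast_zero, zero_mul, zero_div, add_zero, Nat.add_sub_cancel]
  refine Finset.sum_congr rfl fun j _ => ?_
  have hf : (Nat.factorial (j + 1) : ℝ) = ((j : ℝ) + 1) * (Nat.factorial j : ℝ) := by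
    exact_mod_cast congrArg (Nat.cast (R := ℝ)) (Nat.factorial_succ j)
  have h0 : (Nat.factorial j : ℝ) ≠ 0 := by positivity
  rw [hf]
  push_cast
  field_simp

lemma hasDerivAt_Gfun (m : ℕ) {x : ℝ} (hx : 0 < x) :
    HasDerivAt (Gfun m)
      (1 + (((m : ℝ) + 1) * x ^ m * ((Nat.factorial m : ℝ) * (Real.exp x - Pser (m + 1) x))
        - x ^ (m + 1) * ((Nat.factorial m : ℝ) * (Real.exp x - Pser m x)))
        / ((Nat.factorial m : ℝ) * (Real.exp x - Pser (m + 1) x)) ^ 2) x := by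
  have hQ : HasDerivAt (fun y => Real.exp y - Pser (m + 1) y) (Real.exp x - Pser m x) x :=
    (Real.hasDerivAt_exp x).sub (hasDerivAt_Pser m x)
  have hden : HasDerivAt (fun y => (Nat.factorial m : ℝ) * (Real.exp y - Pser (m + 1) y))
      ((Nat.factorial m : ℝ) * (Real.exp x - Pser m x)) x := hQ.const_mul _
  have hnum : HasDerivAt (fun y : ℝ => y ^ (m + 1)) (((m : ℝ) + 1) * x ^ m) x := by
    simpa using hasDerivAt_pow (m + 1) x
  have hne : (Nat.factorial m : ℝ) * (Real.exp x - Pser (m + 1) x) ≠ 0 := by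
    have h1 := Q_pos m hx
    positivity
  exact (hasDerivAt_id x).add (hnum.div hden hne)

lemma deriv_expr_pos (m : ℕ) {x : ℝ} (hx : 0 < x) :
    0 < 1 + (((m : ℝ) + 1) * x ^ m * ((Nat.factorial m : ℝ) * (Real.exp x - Pser (m + 1) x))
        - x ^ (m + 1) * ((Nat.factorial m : ℝ) * (Real.exp x - Pser m x)))
        / ((Nat.factorial m : ℝ) * (Real.exp x - Pser (m + 1) x)) ^ 2 := by
  set F : ℝ := (Nat.factorial m : ℝ) with hF'
  have hF : (0 : ℝ) < F := by positivity
  set E₁ : ℝ := Eser (m + 1) x with hE₁'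
  set E₂ : ℝ := Eser (m + 2) x with hE₂'
  have hE₁ : 0 < E₁ := Eser_pos (m + 1) hx
  have hE₂ : 0 < E₂ := Eser_pos (m + 2) hx
  have hQ1 : Real.exp x - Pser (m + 1) x = x ^ (m + 1) * E₁ := exp_sub_Pser (m + 1) x
  have hQ2 : Real.exp x - Pser m x = x ^ m * Eser m x := exp_sub_Pser m x
  have hEm : Eser m x = 1 / F + x * E₁ := Eser_succ m hx.le
  have hsucc : E₁ = 1 / (Nat.factorial (m + 1) : ℝ) + x * E₂ := Eser_succ (m + 1) hx.le
  have hfa : (Nat.factorial (m + 1) : ℝ) = ((m : ℝ) + 1) * F := by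
    rw [hF']; exact_mod_cast congrArg (Nat.cast (R := ℝ)) (Nat.factorial_succ m)
  have hD : Dser (m + 1) x = E₁ - ((m : ℝ) + 1) * E₂ := by
    have := Dser_eq (m + 1) hx.le
    rw [this]; push_cast; ring
  have hcore := core_ineq m hx
  have hcore' : E₁ - ((m : ℝ) + 1) * E₂ < F * E₁ ^ 2 := by rw [← hD]; exact hcore
  have h2 : ((m : ℝ) + 1) * F * E₁ = 1 + ((m : ℝ) + 1) * F * x * E₂ := by
    rw [hsucc, hfa]
    have : ((m : ℝ) + 1) * F ≠ 0 := by positivity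
    field_simp
  have h1 : x * (E₁ - ((m : ℝ) + 1) * E₂) < x * (F * E₁ ^ 2) :=
    mul_lt_mul_of_pos_left hcore' hx
  have hW : 0 < F ^ 2 * x * E₁ ^ 2 + ((m : ℝ) + 1) * F * E₁ - F * x * E₁ - 1 := by
    nlinarith [mul_lt_mul_of_pos_left h1 hF, h2]
  rw [hQ1, hQ2, hEm]
  have hxm : 0 < x ^ m := by positivity
  rw [pow_succ]
  set t : ℝ := x ^ m with ht'
  have habs : ∀ N C : ℝ, 0 < C → 0 < C ^ 2 + N → 0 < 1 + N / C ^ 2 := by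
    intro N C hC h
    have he : 1 + N / C ^ 2 = (C ^ 2 + N) / C ^ 2 := by field_simp
    rw [he]
    exact div_pos h (by positivity)
  refine habs _ _ (by positivity) ?_
  have hkey : (F * (t * x * E₁)) ^ 2 + (((m : ℝ) + 1) * t * (F * (t * x * E₁))
      - t * x * (F * (t * (1 / F + x * E₁))))
      = t * t * x * (F ^ 2 * x * E₁ ^ 2 + ((m : ℝ) + 1) * F * E₁ - F * x * E₁ - 1) := by
    field_simp
    ring
  rw [hkey]
  positivity

lemma Gfun_strictMonoOn (m : ℕ) : StrictMonoOn (Gfun m) (Set.Ioi (0 : ℝ)) := by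
  apply strictMonoOn_of_deriv_pos (convex_Ioi 0)
  · intro x hx
    exact (hasDerivAt_Gfun m hx).continuousAt.continuousWithinAt
  · intro x hx
    rw [interior_Ioi] at hx
    rw [(hasDerivAt_Gfun m hx).deriv]
    exact deriv_expr_pos m hx

lemma gPo_eq (m : ℕ) {l : ℝ} (hl : 0 < l) : gPo (m + 1) l = Gfun m l := by
  have hE₁ : 0 < Eser (m + 1) l := Eser_pos (m + 1) hl
  have hF : (0 : ℝ) < (Nat.factorial m : ℝ) := by positivity
  have hexp : Real.exp (-l) ≠ 0 := Real.exp_ne_zero _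
  rw [gPo, show m + 1 - 1 = m from rfl, fPo_eq, fPo_eq, Gfun, exp_sub_Pser,
    Eser_succ m hl.le]
  rw [pow_succ]
  field_simp
  ring

lemma htil_eq (m : ℕ) {l : ℝ} (hl : 0 < l) :
    htil (m + 1) l = 1 / ((Nat.factorial m : ℝ) * Eser m l) := by
  have hE : 0 < Eser m l := Eser_pos m hl
  have hF : (0 : ℝ) < (Nat.factorial m : ℝ) := by positivity
  have hexp : Real.exp (-l) ≠ 0 := Real.exp_ne_zero _
  rw [htil, show m + 1 - 1 = m from rfl, fPo_eq]
  field_simp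

end Stage3

theorem stmt4 (k : ℕ) (hk : 2 ≤ k) :
    ∀ x₁ x₂ l₁ l₂ : ℝ, (k : ℝ) < x₁ → x₁ < x₂ → 0 < l₁ → 0 < l₂ →
      gPo k l₁ = x₁ → gPo k l₂ = x₂ → htil k l₂ < htil k l₁ := by
  obtain ⟨m, rfl⟩ : ∃ m, k = m + 1 := ⟨k - 1, by omega⟩
  intro x₁ x₂ l₁ l₂ hx1 hx12 hl1 hl2 hg1 hg2
  rw [gPo_eq m hl1] at hg1
  rw [gPo_eq m hl2] at hg2
  have hll : l₁ < l₂ := by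
    rcases lt_trichotomy l₁ l₂ with h | h | h
    · exact h
    · exfalso; rw [h, hg2] at hg1; linarith
    · exfalso
      have := Gfun_strictMonoOn m (Set.mem_Ioi.mpr hl2) (Set.mem_Ioi.mpr hl1) h
      rw [hg1, hg2] at this
      linarith
  rw [htil_eq m hl1, htil_eq m hl2]
  have hE1 : 0 < Eser m l₁ := Eser_pos m hl1
  have hlt : Eser m l₁ < Eser m l₂ := Eser_lt m hl1 hll
  have hF : (0 : ℝ) < (Nat.factorial m : ℝ) := by positivity
  apply one_div_lt_one_div_of_lt
  · positivity
  · exact mul_lt_mul_of_pos_left hlt hF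
end

section
/- Fix integers k, r ≥ 2 with (r, k) ≠ (2, 2), let h_{r,k}(μ) = μ / f_{k−1}(μ)^{r−1}, and suppose μ > 0 is a critical point of h_{r,k} (the derivative of h_{r,k} at μ is 0). Let ζ = g_k(μ) = μ·f_{k−1}(μ)/f_k(μ) (the ratio r·β/α for α = f_k(μ) and β = (1/r)·μ·f_{k−1}(μ)). Then k < ζ < r(k−1). -/
/-- `hFun r k μ = μ / f_{k-1}(μ)^{r-1}`. -/
noncomputable def hFun (r k : ℕ) (μ : ℝ) : ℝ := μ / (fPo (k - 1) μ) ^ (r - 1)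

lemma summable_aux (k : ℕ) (μ : ℝ) :
    Summable (fun i : ℕ => μ ^ (k + i) / (Nat.factorial (k + i) : ℝ)) := by
  have h := (summable_nat_add_iff k).2 (Real.summable_pow_div_factorial μ)
  convert h using 2 with i
  · rfl
  rw [add_comm]

lemma tsum_exp (μ : ℝ) : ∑' i : ℕ, μ ^ i / (Nat.factorial i : ℝ) = Real.exp μ := by
  rw [Real.exp_eq_exp_ℝ, NormedSpace.exp_eq_tsum_div]

lemma fPo_eq_s12 (k : ℕ) (μ : ℝ) :
    fPo k μ = 1 - Real.exp (-μ) * ∑ i ∈ Finset.range k, μ ^ i / (Nat.factorial i : ℝ) := by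
  have h := Summable.sum_add_tsum_nat_add (f := fun i : ℕ => μ ^ i / (Nat.factorial i : ℝ)) k
    (Real.summable_pow_div_factorial μ)
  have h2 : ∑' (i : ℕ), μ ^ (i + k) / (Nat.factorial (i + k) : ℝ)
      = ∑' (i : ℕ), μ ^ (k + i) / (Nat.factorial (k + i) : ℝ) := by
    congr 1; ext i; rw [add_comm]
  rw [h2, tsum_exp] at h
  have h3 : (∑' (i : ℕ), μ ^ (k + i) / (Nat.factorial (k + i) : ℝ))
      = Real.exp μ - ∑ i ∈ Finset.range k, μ ^ i / (Nat.factorial i : ℝ) := by linarith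
  rw [fPo, h3, mul_sub, ← Real.exp_add]
  simp

lemma fPo_pos (k : ℕ) {μ : ℝ} (hμ : 0 < μ) : 0 < fPo k μ := by
  apply mul_pos (Real.exp_pos _)
  exact Summable.tsum_pos (summable_aux k μ) (fun i => by positivity) 0 (by positivity)

lemma fPo_hasDerivAt (k : ℕ) (hk : 1 ≤ k) (μ : ℝ) :
    HasDerivAt (fPo k) (Real.exp (-μ) * μ ^ (k - 1) / (Nat.factorial (k - 1) : ℝ)) μ := by
  have hfun : fPo k = fun x => 1 - Real.exp (-x) * ∑ i ∈ Finset.range k, x ^ i / (Nat.factorial i : ℝ) := by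
    ext x; exact fPo_eq_s12 k x
  rw [hfun]
  have hP : HasDerivAt (fun x : ℝ => ∑ i ∈ Finset.range k, x ^ i / (Nat.factorial i : ℝ))
      (∑ i ∈ Finset.range (k - 1), μ ^ i / (Nat.factorial i : ℝ)) μ := by
    have h1 : HasDerivAt (fun x : ℝ => ∑ i ∈ Finset.range k, x ^ i / (Nat.factorial i : ℝ))
        (∑ i ∈ Finset.range k, (i : ℝ) * μ ^ (i - 1) / (Nat.factorial i : ℝ)) μ := by
      apply HasDerivAt.fun_sum
      intro i _
      simpa [div_eq_mul_inv] using (hasDerivAt_pow i μ).div_const (Nat.factorial i : ℝ)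
    convert h1 using 1
    obtain ⟨m, rfl⟩ : ∃ m, k = m + 1 := ⟨k - 1, by omega⟩
    rw [Finset.sum_range_succ' (fun i => (i : ℝ) * μ ^ (i - 1) / (Nat.factorial i : ℝ)) m]
    simp only [Nat.add_sub_cancel, Nat.cast_zero, zero_mul, Nat.factorial_zero, Nat.cast_one,
      zero_div, add_zero]
    apply Finset.sum_congr rfl
    intro i _
    rw [Nat.factorial_succ]
    push_cast
    field_simp
  have hE : HasDerivAt (fun x : ℝ => Real.exp (-x)) (-Real.exp (-μ)) μ := by
    simpa using (hasDerivAt_neg μ).exp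
  have hprod := ((hE.mul hP).const_sub 1)
  convert hprod using 1
  · rfl
  · rfl
  · rfl
  have hsplit : ∑ i ∈ Finset.range k, μ ^ i / (Nat.factorial i : ℝ)
      = ∑ i ∈ Finset.range (k - 1), μ ^ i / (Nat.factorial i : ℝ)
        + μ ^ (k - 1) / (Nat.factorial (k - 1) : ℝ) := by
    obtain ⟨m, rfl⟩ : ∃ m, k = m + 1 := ⟨k - 1, by omega⟩
    rw [Finset.sum_range_succ]
    simp
  rw [hsplit]
  ring

lemma fPo_split (k : ℕ) (μ : ℝ) :
    fPo k μ = Real.exp (-μ) * (μ ^ k / (Nat.factorial k : ℝ)) + fPo (k + 1) μ := by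
  rw [fPo, fPo, Summable.tsum_eq_zero_add (summable_aux k μ)]
  have h : ∀ i : ℕ, μ ^ (k + (i + 1)) / (Nat.factorial (k + (i + 1)) : ℝ)
      = μ ^ (k + 1 + i) / (Nat.factorial (k + 1 + i) : ℝ) := by
    intro i
    have he : k + (i + 1) = k + 1 + i := by omega
    rw [he]
  simp only [h, add_zero]
  ring

lemma sum_lt_tsum_T (m n : ℕ) {μ : ℝ} (hμ : 0 < μ) :
    ∑ j ∈ Finset.range n, μ ^ (m + j) / (Nat.factorial (m + j) : ℝ)
      < ∑' i : ℕ, μ ^ (m + i) / (Nat.factorial (m + i) : ℝ) := by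
  rw [← Summable.sum_add_tsum_nat_add n (summable_aux m μ)]
  have hpos : 0 < ∑' i : ℕ, μ ^ (m + (i + n)) / (Nat.factorial (m + (i + n)) : ℝ) := by
    apply Summable.tsum_pos ((summable_nat_add_iff n).2 (summable_aux m μ)) (fun i => by positivity) 0
    positivity
  linarith

/-- factorial upper bound along a run of indices below `μ`. -/
lemma fact_le_run (m q : ℕ) {μ : ℝ} (hq : (m : ℝ) + 1 + (q : ℝ) ≤ μ) :
    ∀ j ≤ q, ((Nat.factorial (m + 1 + j) : ℕ) : ℝ) ≤ μ ^ j * (Nat.factorial (m + 1) : ℝ) := by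
  intro j hj
  induction j with
  | zero => simp
  | succ j ih =>
    have hj' : j ≤ q := by omega
    have ihj := ih hj'
    have hfac : (Nat.factorial (m + 1 + (j + 1)) : ℝ)
        = ((m : ℝ) + 2 + j) * (Nat.factorial (m + 1 + j) : ℝ) := by
      have h9 : m + 1 + (j + 1) = (m + 1 + j) + 1 := by omega
      rw [h9, Nat.factorial_succ]
      push_cast
      ring
    have hle : (m : ℝ) + 2 + j ≤ μ := by
      have h8 : (j : ℝ) ≤ (q : ℝ) - 1 := by
        have : (j : ℝ) + 1 ≤ (q : ℝ) := by exact_mod_cast hj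
        linarith
      linarith
    have hμ0 : (0:ℝ) < μ := by
      have : (0:ℝ) ≤ (m:ℝ) + 1 + q := by positivity
      linarith
    calc (Nat.factorial (m + 1 + (j + 1)) : ℝ)
        = ((m : ℝ) + 2 + j) * (Nat.factorial (m + 1 + j) : ℝ) := hfac
      _ ≤ μ * (μ ^ j * (Nat.factorial (m + 1) : ℝ)) := by
          apply mul_le_mul hle ihj (by positivity)
          exact hμ0.le
      _ = μ ^ (j + 1) * (Nat.factorial (m + 1) : ℝ) := by ring

set_option maxHeartbeats 800000 in
/-- Lower bound: from the critical equation, `(m+1)(C-1) < μ C`. -/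
lemma lowerIneq (m : ℕ) (μ C : ℝ) (hμ : 0 < μ) (hC1 : 1 < C)
    (hEq : (∑' i : ℕ, μ ^ (m + i) / (Nat.factorial (m + i) : ℝ))
      = C * (μ ^ m / (Nat.factorial m : ℝ))) :
    ((m : ℝ) + 1) * (C - 1) < μ * C := by
  set A : ℝ := μ ^ m / (Nat.factorial m : ℝ) with hAdef
  have hA0 : 0 < A := by rw [hAdef]; positivity
  by_cases hcase : (m : ℝ) + 1 ≤ μ
  · nlinarith
  · push_neg at hcase
    set x : ℝ := μ / ((m:ℝ) + 1) with hxdef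
    have hx0 : 0 ≤ x := by positivity
    have hx1 : x < 1 := by
      rw [hxdef, div_lt_one (by positivity)]
      linarith
    have hgs : Summable (fun i : ℕ => A * x ^ i) :=
      (summable_geometric_of_lt_one hx0 hx1).mul_left A
    have hle : ∀ i : ℕ, μ ^ (m + i) / (Nat.factorial (m + i) : ℝ) ≤ A * x ^ i := by
      intro i
      have hfd : ((Nat.factorial m * (m + 1) ^ i : ℕ) : ℝ) ≤ ((Nat.factorial (m + i) : ℕ) : ℝ) := by
        exact_mod_cast Nat.factorial_mul_pow_le_factorial
      have hAx : A * x ^ i = μ ^ (m + i) / ((Nat.factorial m : ℝ) * ((m:ℝ) + 1) ^ i) := by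
        rw [hAdef, hxdef, div_pow, pow_add]
        field_simp
      rw [hAx]
      apply div_le_div_of_nonneg_left (by positivity) (by positivity)
      calc ((Nat.factorial m : ℝ) * ((m:ℝ)+1) ^ i)
          = ((Nat.factorial m * (m + 1) ^ i : ℕ) : ℝ) := by push_cast; ring
        _ ≤ _ := hfd
    have hstrict : μ ^ (m + 2) / (Nat.factorial (m + 2) : ℝ) < A * x ^ 2 := by
      have hfd : ((Nat.factorial m * (m + 1) ^ 2 : ℕ) : ℝ) < ((Nat.factorial (m + 2) : ℕ) : ℝ) := by
        have h5 : Nat.factorial m * (m + 1) ^ 2 < Nat.factorial (m + 2) := by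
          have h1 : Nat.factorial (m + 2) = (m + 2) * ((m + 1) * Nat.factorial m) := by
            rw [Nat.factorial_succ, Nat.factorial_succ]
          rw [h1]
          have hfp : 0 < Nat.factorial m := Nat.factorial_pos m
          nlinarith
        exact_mod_cast h5
      have hAx : A * x ^ 2 = μ ^ (m + 2) / ((Nat.factorial m : ℝ) * ((m:ℝ) + 1) ^ 2) := by
        rw [hAdef, hxdef, div_pow, pow_add]
        field_simp
      rw [hAx]
      apply div_lt_div_of_pos_left (by positivity) (by positivity)
      calc ((Nat.factorial m : ℝ) * ((m:ℝ)+1) ^ 2)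
          = ((Nat.factorial m * (m + 1) ^ 2 : ℕ) : ℝ) := by push_cast; ring
        _ < _ := hfd
    have hlt := Summable.tsum_lt_tsum_of_nonneg (fun b => by positivity) hle hstrict hgs
    rw [hEq, tsum_mul_left, tsum_geometric_of_lt_one hx0 hx1] at hlt
    have hx1' : 0 < 1 - x := by linarith
    have hCx : C * (1 - x) < 1 := by
      have h3 : C * (1 - x) * A < A := by
        calc C * (1 - x) * A = (C * A) * (1 - x) := by ring
          _ < (A * (1 - x)⁻¹) * (1 - x) := mul_lt_mul_of_pos_right hlt hx1'
          _ = A := by field_simp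
      nlinarith
    have hxval : x * ((m:ℝ) + 1) = μ := by
      rw [hxdef]; field_simp
    nlinarith [hCx, hxval]

set_option maxHeartbeats 800000 in
/-- general-case partial sum lower bound -/
lemma genBound (m c : ℕ) (μ : ℝ) (hm : 1 ≤ m) (hc3 : 3 ≤ c) (hμ : 0 < μ)
    (hμc : (m : ℝ) + (c : ℝ) - 2 ≤ μ)
    (hkey3 : ((c:ℝ) - 1) * ((m:ℝ) + 1) ≤ ((c:ℝ) - 2) * μ) :
    (c : ℝ) * (μ ^ m / (Nat.factorial m : ℝ))
      ≤ ∑ j ∈ Finset.range (c - 1), μ ^ (m + j) / (Nat.factorial (m + j) : ℝ) := by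
  set A : ℝ := μ ^ m / (Nat.factorial m : ℝ) with hAdef
  have hA0 : 0 < A := by rw [hAdef]; positivity
  have hrange : c - 1 = (c - 2) + 1 := by omega
  rw [hrange, Finset.sum_range_succ' (fun j => μ ^ (m + j) / (Nat.factorial (m + j) : ℝ)) (c - 2)]
  have hterm0 : μ ^ (m + 0) / (Nat.factorial (m + 0) : ℝ) = A := by
    rw [hAdef]; norm_num
  have hqbound : ∀ j ∈ Finset.range (c - 2),
      A * (μ / ((m:ℝ) + 1)) ≤ μ ^ (m + (j + 1)) / (Nat.factorial (m + (j + 1)) : ℝ) := by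
    intro j hj
    have hjle : j ≤ c - 3 := by
      have := Finset.mem_range.mp hj
      omega
    have hcast : ((c - 3 : ℕ) : ℝ) = (c : ℝ) - 3 := by
      push_cast [Nat.cast_sub hc3]
      try ring
    have hfl := fact_le_run m (c - 3) (μ := μ) (by rw [hcast]; linarith) j hjle
    have hidx : m + (j + 1) = m + 1 + j := by omega
    rw [hidx]
    have hfacm1 : ((Nat.factorial (m+1) : ℕ) : ℝ) = ((m:ℝ) + 1) * (Nat.factorial m : ℝ) := by
      rw [Nat.factorial_succ]; push_cast; ring
    have hstep : μ ^ (m + 1 + j) / (μ ^ j * (Nat.factorial (m + 1) : ℝ))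
        ≤ μ ^ (m + 1 + j) / (Nat.factorial (m + 1 + j) : ℝ) := by
      apply div_le_div_of_nonneg_left (by positivity) (by positivity) hfl
    have heq2 : μ ^ (m + 1 + j) / (μ ^ j * (Nat.factorial (m + 1) : ℝ))
        = A * (μ / ((m:ℝ) + 1)) := by
      rw [hAdef, hfacm1, pow_add, pow_add]
      field_simp
    linarith [heq2 ▸ hstep]
  have hsum_ge := Finset.card_nsmul_le_sum (Finset.range (c - 2))
    (fun j => μ ^ (m + (j + 1)) / (Nat.factorial (m + (j + 1)) : ℝ))
    (A * (μ / ((m:ℝ) + 1))) hqbound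
  rw [Finset.card_range, nsmul_eq_mul] at hsum_ge
  have hc2 : 2 ≤ c := by omega
  have hcard : ((c - 2 : ℕ) : ℝ) = (c:ℝ) - 2 := by
    push_cast [Nat.cast_sub hc2]
    try ring
  rw [hcard] at hsum_ge
  have hmain : (c:ℝ) * A ≤ ((c:ℝ) - 2) * (A * (μ / ((m:ℝ) + 1))) + A := by
    have hm1R : (0:ℝ) < (m:ℝ) + 1 := by positivity
    have h4 : ((c:ℝ) - 1) * A ≤ ((c:ℝ) - 2) * (A * (μ / ((m:ℝ) + 1))) := by
      rw [← sub_nonneg]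
      have hrw : ((c:ℝ) - 2) * (A * (μ / ((m:ℝ)+1))) - ((c:ℝ)-1) * A
          = A * ((((c:ℝ)-2) * μ - ((c:ℝ)-1)*((m:ℝ)+1)) / ((m:ℝ)+1)) := by
        field_simp
      rw [hrw]
      apply mul_nonneg hA0.le
      apply div_nonneg (by linarith) (by positivity)
    linarith
  rw [hterm0]
  linarith

set_option maxHeartbeats 1000000 in
lemma upperFalse (m r : ℕ) (hm : 1 ≤ m) (hr : 2 ≤ r) (μ : ℝ) (hμ : 0 < μ)
    (hC1 : 1 < ((r:ℝ) - 1) * m)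
    (hEq : (∑' i : ℕ, μ ^ (m + i) / (Nat.factorial (m + i) : ℝ))
      = ((r:ℝ) - 1) * m * (μ ^ m / (Nat.factorial m : ℝ)))
    (hB : (r:ℝ) * m * (((r:ℝ) - 1) * m - 1) ≤ μ * (((r:ℝ) - 1) * m)) : False := by
  have hrR : (2:ℝ) ≤ (r:ℝ) := by exact_mod_cast hr
  have hmR : (1:ℝ) ≤ (m:ℝ) := by exact_mod_cast hm
  set C : ℝ := ((r:ℝ) - 1) * m with hCdef
  have hC0 : (0:ℝ) < C := by linarith
  have hrm : (r:ℝ) * m = C + m := by rw [hCdef]; ring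
  rw [hrm] at hB
  have hmC : (m:ℝ) ≤ C := by nlinarith
  have hμ2 : (m:ℝ) + C - 2 ≤ μ := by nlinarith
  have hfin : ∃ n : ℕ, C * (μ ^ m / (Nat.factorial m : ℝ))
      ≤ ∑ j ∈ Finset.range n, μ ^ (m + j) / (Nat.factorial (m + j) : ℝ) := by
    by_cases hgen : 2 * (m:ℝ) ≤ C * (C - 3)
    · -- general case
      have hc1 : 1 ≤ r - 1 := by omega
      have hcC : (((r - 1) * m : ℕ) : ℝ) = C := by
        rw [hCdef]
        push_cast [Nat.cast_sub (show (1:ℕ) ≤ r by omega)]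
        ring
      have hc3 : 3 ≤ (r - 1) * m := by
        by_contra hcon
        push_neg at hcon
        have h2 : ((r-1)*m : ℕ) ≤ 2 := by omega
        have h2R : C ≤ 2 := by
          rw [← hcC]; exact_mod_cast h2
        nlinarith
      have hc3R : (3:ℝ) ≤ C := by rw [← hcC]; exact_mod_cast hc3
      have hkey3 : (C - 1) * ((m:ℝ) + 1) ≤ (C - 2) * μ := by
        have hC2 : (0:ℝ) ≤ C - 2 := by linarith
        have h1 : (C - 2) * ((C + m) * (C - 1)) ≤ (C - 2) * (μ * C) :=
          mul_le_mul_of_nonneg_left hB hC2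
        nlinarith [h1, hgen, hC0]
      refine ⟨(r - 1) * m - 1, ?_⟩
      have := genBound m ((r-1)*m) μ hm hc3 hμ (by rw [hcC]; linarith) (by rw [hcC]; exact hkey3)
      rw [hcC] at this
      exact this
    · -- exceptional cases
      push_neg at hgen
      have hx : ((r-1)*m) * ((r-1)*m) < 3 * ((r-1)*m) + 2 * m := by
        have hcC : (((r - 1) * m : ℕ) : ℝ) = C := by
          rw [hCdef]
          push_cast [Nat.cast_sub (show (1:ℕ) ≤ r by omega)]
          ring
        have : (((r-1)*m : ℕ):ℝ) * (((r-1)*m : ℕ):ℝ) < 3 * (((r-1)*m : ℕ):ℝ) + 2 * (m:ℕ) := by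
          rw [hcC]; nlinarith
        exact_mod_cast this
      have hc2 : 2 ≤ (r - 1) * m := by
        have : (1:ℝ) < (((r-1)*m : ℕ):ℝ) := by
          rw [hCdef] at hC1
          push_cast [Nat.cast_sub (show (1:ℕ) ≤ r by omega)]
          linarith [hC1]
        exact_mod_cast this
      have hmc : m ≤ (r - 1) * m := Nat.le_mul_of_pos_left m (by omega)
      have hrc : r - 1 ≤ (r - 1) * m := Nat.le_mul_of_pos_right (r-1) (by omega)
      have hc4 : (r - 1) * m ≤ 4 := by nlinarith
      have hm4 : m ≤ 4 := le_trans hmc hc4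
      have hr5 : r ≤ 5 := by omega
      clear hgen hμ2 hmC hrm hC0 hC1 hEq
      rw [hCdef] at hB ⊢
      clear hCdef
      clear C
      interval_cases r <;> interval_cases m
      all_goals try omega
      all_goals push_cast at hB ⊢
      all_goals norm_num at hB ⊢
      · -- r = 2, m = 2, μ ≥ 2
        refine ⟨4, ?_⟩
        rw [Finset.sum_range_succ, Finset.sum_range_succ, Finset.sum_range_succ,
          Finset.sum_range_one]
        norm_num [Nat.factorial]
        nlinarith [mul_nonneg (show (0:ℝ) ≤ μ - 2 by linarith) (pow_nonneg hμ.le 2),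
          mul_nonneg (show (0:ℝ) ≤ μ - 2 by linarith) (pow_nonneg hμ.le 3),
          pow_nonneg hμ.le 5]
      · -- r = 2, m = 3, μ ≥ 4
        refine ⟨4, ?_⟩
        rw [Finset.sum_range_succ, Finset.sum_range_succ, Finset.sum_range_succ,
          Finset.sum_range_one]
        norm_num [Nat.factorial]
        nlinarith [mul_nonneg (show (0:ℝ) ≤ μ - 4 by linarith) (pow_nonneg hμ.le 3),
          mul_nonneg (show (0:ℝ) ≤ μ - 4 by linarith) (pow_nonneg hμ.le 4),
          mul_nonneg (show (0:ℝ) ≤ μ - 4 by linarith) (pow_nonneg hμ.le 5)]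
      · -- r = 2, m = 4, μ ≥ 6
        refine ⟨4, ?_⟩
        rw [Finset.sum_range_succ, Finset.sum_range_succ, Finset.sum_range_succ,
          Finset.sum_range_one]
        norm_num [Nat.factorial]
        nlinarith [mul_nonneg (show (0:ℝ) ≤ μ - 6 by linarith) (pow_nonneg hμ.le 4),
          mul_nonneg (show (0:ℝ) ≤ μ - 6 by linarith) (pow_nonneg hμ.le 5),
          mul_nonneg (show (0:ℝ) ≤ μ - 6 by linarith) (pow_nonneg hμ.le 6)]
      · -- r = 3, m = 1, μ ≥ 3/2
        refine ⟨3, ?_⟩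
        rw [Finset.sum_range_succ, Finset.sum_range_succ, Finset.sum_range_one]
        norm_num [Nat.factorial]
        nlinarith [mul_nonneg (show (0:ℝ) ≤ 2 * μ - 3 by linarith) hμ.le,
          mul_nonneg (show (0:ℝ) ≤ 2 * μ - 3 by linarith) (pow_nonneg hμ.le 2)]
      · -- r = 4, m = 1, μ ≥ 8/3
        refine ⟨3, ?_⟩
        rw [Finset.sum_range_succ, Finset.sum_range_succ, Finset.sum_range_one]
        norm_num [Nat.factorial]
        nlinarith [mul_nonneg (show (0:ℝ) ≤ 3 * μ - 8 by linarith) hμ.le,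
          mul_nonneg (show (0:ℝ) ≤ 3 * μ - 8 by linarith) (pow_nonneg hμ.le 2)]
  obtain ⟨n, hn⟩ := hfin
  have hlt := sum_lt_tsum_T m n hμ
  rw [hEq] at hlt
  linarith


set_option maxHeartbeats 1000000 in
theorem stmt12 (k r : ℕ) (hk : 2 ≤ k) (hr : 2 ≤ r) (hne : ¬(r = 2 ∧ k = 2))
    (μ : ℝ) (hμ : 0 < μ) (hcrit : deriv (hFun r k) μ = 0) :
    (k : ℝ) < μ * fPo (k - 1) μ / fPo k μ ∧
      μ * fPo (k - 1) μ / fPo k μ < (r : ℝ) * ((k : ℝ) - 1) := by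
  obtain ⟨m, rfl⟩ : ∃ m, k = m + 1 := ⟨k - 1, by omega⟩
  have hm1 : 1 ≤ m := by omega
  have hm0 : 0 < m := hm1
  have hkm : m + 1 - 1 = m := by omega
  set F' : ℝ := Real.exp (-μ) * μ ^ (m - 1) / (Nat.factorial (m - 1) : ℝ) with hF'def
  have hFd : HasDerivAt (fPo m) F' μ := fPo_hasDerivAt m hm1 μ
  have hFpos : 0 < fPo m μ := fPo_pos m hμ
  have hFne : (fPo m μ) ^ (r - 1) ≠ 0 := by positivity
  have hfun : hFun r (m + 1) = fun y : ℝ => y / (fPo m y) ^ (r - 1) := by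
    funext y
    rw [hFun, hkm]
  have hd1 : HasDerivAt (fun y : ℝ => (fPo m y) ^ (r - 1))
      (((r - 1 : ℕ) : ℝ) * (fPo m μ) ^ (r - 1 - 1) * F') μ := hFd.pow (r - 1)
  have hq : HasDerivAt (hFun r (m + 1))
      ((1 * (fPo m μ) ^ (r - 1) - μ * (((r - 1 : ℕ) : ℝ) * (fPo m μ) ^ (r - 1 - 1) * F'))
        / ((fPo m μ) ^ (r - 1)) ^ 2) μ := by
    rw [hfun]
    exact (hasDerivAt_id μ).div hd1 hFne
  have hnum : (1 * (fPo m μ) ^ (r - 1)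
      - μ * (((r - 1 : ℕ) : ℝ) * (fPo m μ) ^ (r - 1 - 1) * F')) = 0 := by
    have h0 := hq.deriv
    rw [hcrit] at h0
    rcases div_eq_zero_iff.mp h0.symm with h | h
    · exact h
    · exact absurd h (by positivity)
  have hrc : ((r - 1 : ℕ) : ℝ) = (r : ℝ) - 1 := by
    have h7 : (1:ℕ) ≤ r := by omega
    push_cast [Nat.cast_sub h7]
    ring
  have hpowsplit : (fPo m μ) ^ (r - 1) = fPo m μ * (fPo m μ) ^ (r - 1 - 1) := by
    rw [← pow_succ']
    congr 1
    omega
  have hXpos : (0:ℝ) < (fPo m μ) ^ (r - 1 - 1) := by positivity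
  have hkey : fPo m μ = ((r : ℝ) - 1) * μ * F' := by
    rw [hpowsplit, hrc] at hnum
    have h2 : (fPo m μ) ^ (r - 1 - 1) * (fPo m μ - ((r:ℝ) - 1) * μ * F') = 0 := by
      ring_nf
      ring_nf at hnum
      linarith
    rcases mul_eq_zero.mp h2 with h | h
    · exact absurd h (ne_of_gt hXpos)
    · linarith
  have hfacm : ((Nat.factorial m : ℕ) : ℝ) = (m : ℝ) * ((Nat.factorial (m - 1) : ℕ) : ℝ) := by
    exact_mod_cast (Nat.mul_factorial_pred hm0.ne').symm
  have hpowm : μ ^ m = μ ^ (m - 1) * μ := by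
    rw [← pow_succ]
    congr 1
    omega
  have hfm1 : (0:ℝ) < (Nat.factorial (m - 1) : ℝ) := by positivity
  have hmR : (0:ℝ) < (m:ℝ) := by exact_mod_cast hm0
  have hkey2 : fPo m μ = Real.exp (-μ) * (((r:ℝ) - 1) * (m:ℝ) * (μ ^ m / (Nat.factorial m : ℝ))) := by
    rw [hkey, hF'def, hpowm, hfacm]
    field_simp
  have hEq : (∑' i : ℕ, μ ^ (m + i) / (Nat.factorial (m + i) : ℝ))
      = ((r:ℝ) - 1) * (m:ℝ) * (μ ^ m / (Nat.factorial m : ℝ)) := by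
    have h6 := hkey2
    rw [fPo] at h6
    exact mul_left_cancel₀ (Real.exp_ne_zero (-μ)) h6
  have hsplit := fPo_split m μ
  have hFk : fPo (m + 1) μ
      = Real.exp (-μ) * ((((r:ℝ) - 1) * (m:ℝ) - 1) * (μ ^ m / (Nat.factorial m : ℝ))) := by
    rw [hkey2] at hsplit
    have : fPo (m + 1) μ = fPo m μ - Real.exp (-μ) * (μ ^ m / (Nat.factorial m : ℝ)) := by
      linarith
    rw [this, hkey2]
    ring
  have hA0 : (0:ℝ) < μ ^ m / (Nat.factorial m : ℝ) := by positivity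
  have hC1 : 1 < ((r:ℝ) - 1) * (m:ℝ) := by
    have h1 := fPo_pos (m + 1) hμ
    rw [hFk] at h1
    have h2 : 0 < (((r:ℝ) - 1) * (m:ℝ) - 1) * (μ ^ m / (Nat.factorial m : ℝ)) := by
      have h3 := Real.exp_pos (-μ)
      nlinarith
    nlinarith
  have hC1' : (0:ℝ) < ((r:ℝ) - 1) * (m:ℝ) - 1 := by linarith
  have hζ : μ * fPo m μ / fPo (m + 1) μ
      = μ * (((r:ℝ) - 1) * (m:ℝ)) / (((r:ℝ) - 1) * (m:ℝ) - 1) := by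
    rw [hkey2, hFk]
    rw [div_eq_div_iff
      (by positivity : (0:ℝ) < Real.exp (-μ) * ((((r:ℝ) - 1) * (m:ℝ) - 1) * (μ ^ m / (Nat.factorial m : ℝ)))).ne'
      hC1'.ne']
    ring
  rw [hkm, hζ]
  constructor
  · rw [lt_div_iff₀ hC1']
    have hlow := lowerIneq m μ (((r:ℝ) - 1) * (m:ℝ)) hμ hC1 hEq
    push_cast
    linarith
  · rw [div_lt_iff₀ hC1']
    by_contra hB'
    push_neg at hB'
    have hB : (r:ℝ) * (m:ℝ) * (((r:ℝ) - 1) * (m:ℝ) - 1) ≤ μ * (((r:ℝ) - 1) * (m:ℝ)) := by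
      push_cast at hB'
      nlinarith [hB']
    exact upperFalse m r hm1 hr μ hμ hC1 hEq hB
end
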